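/- Let k : ℝ^n × ℝ^n → ℝ be symmetric positive semi-definite of the form k(z,z') = 𝕜(‖z − z'‖₂) for some 𝕜 : ℝ → ℝ. Then the kernel k*(x,x') = 𝕜(√(h(x,x'))) on a product of finite sets X = X_1 × ... × X_n, where h is the Hamming distance, is symmetric positive semi-definite. -/
import Mathlib


/-- if `k(z,z') = 𝕜(‖z − z'‖₂)` is a symmetric positive semi-definite kernel on
the Euclidean space of one-hot encodings (dimension `s = Σ |X_i|`), then
`k*(x,x') = 𝕜(√h(x,x'))` with `h` the Hamming distance is positive semi-definite on
`X = X_1 × ⋯ × X_n`. -/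
theorem stmt_5 (n : ℕ) (X : Fin n → Type*) [∀ i, Fintype (X i)] [∀ i, DecidableEq (X i)]
    (s : ℕ) (hs : s = ∑ i, Fintype.card (X i))
    (𝕜 : ℝ → ℝ)
    (hPSD : ∀ (m : ℕ) (z : Fin m → (Fin s → ℝ)) (c : Fin m → ℝ),
      0 ≤ ∑ a, ∑ b, c a * c b * 𝕜 (Real.sqrt (∑ j, (z a j - z b j) ^ 2))) :
    ∀ (m : ℕ) (x : Fin m → (∀ i, X i)) (c : Fin m → ℝ),
      0 ≤ ∑ a, ∑ b, c a * c b *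
        𝕜 (Real.sqrt ((Finset.univ.filter (fun i => x a i ≠ x b i)).card)) := by
  intro m x c
  have hcard : Fintype.card (Σ i, X i) = s := by
    simp [Fintype.card_sigma, hs]
  let e : (Σ i, X i) ≃ Fin s := Fintype.equivFinOfCardEq hcard
  set r : ℝ := (Real.sqrt 2)⁻¹ with hr
  have hr2 : r ^ 2 = 1 / 2 := by
    rw [hr, inv_pow, Real.sq_sqrt (by norm_num : (0:ℝ) ≤ 2)]
    norm_num
  let z : Fin m → Fin s → ℝ := fun a j =>
    if x a (e.symm j).1 = (e.symm j).2 then r else 0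
  have key : ∀ a b, (∑ j, (z a j - z b j) ^ 2)
      = ((Finset.univ.filter (fun i => x a i ≠ x b i)).card : ℝ) := by
    intro a b
    calc ∑ j, (z a j - z b j) ^ 2
        = ∑ p : Σ i, X i,
            ((if x a p.1 = p.2 then r else 0) - (if x b p.1 = p.2 then r else 0)) ^ 2 := by
          exact (Equiv.sum_comp e.symm fun p : Σ i, X i =>
            ((if x a p.1 = p.2 then r else 0) - (if x b p.1 = p.2 then r else 0)) ^ 2)
      _ = ∑ i, ∑ v : X i,
            ((if x a i = v then r else 0) - (if x b i = v then r else 0)) ^ 2 := by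
          rw [← Finset.univ_sigma_univ, Finset.sum_sigma]
      _ = ∑ i, (if x a i ≠ x b i then (1:ℝ) else 0) := by
          refine Finset.sum_congr rfl fun i _ => ?_
          by_cases h : x a i = x b i
          · simp [h]
          · rw [if_pos h]
            have hterm : ∀ v : X i,
                ((if x a i = v then r else 0) - (if x b i = v then r else 0)) ^ 2
                = (if x a i = v then r ^ 2 else 0) + (if x b i = v then r ^ 2 else 0) := by
              intro v
              by_cases h1 : x a i = v <;> by_cases h2 : x b i = v
              · exact absurd (h1.trans h2.symm) h
              · simp [h1, h2]
              · simp [h1, h2]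
              · simp [h1, h2]
            rw [Finset.sum_congr rfl fun v _ => hterm v, Finset.sum_add_distrib]
            simp [Finset.sum_ite_eq, hr2]
            norm_num
      _ = ((Finset.univ.filter (fun i => x a i ≠ x b i)).card : ℝ) := by
          rw [Finset.card_filter]
          push_cast
          simp [Finset.sum_ite]
  have h := hPSD m z c
  simp only [key] at h
  exact h
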